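/- arXiv:1208.5171 — 4 statements merged into one kernel-verified Lean document; each statement's English description precedes it below -/
import Mathlib

section
/- Let a, b be nonnegative reals satisfying a² + b² - 2a - 2b - 2ab + 1 ≤ 0. Then √a + √b ≥ 1 and |√a - √b| ≤ 1. -/
theorem stmt_0 (a b : ℝ) (ha : 0 ≤ a) (hb : 0 ≤ b)
    (h : a ^ 2 + b ^ 2 - 2 * a - 2 * b - 2 * a * b + 1 ≤ 0) :
    1 ≤ Real.sqrt a + Real.sqrt b ∧ |Real.sqrt a - Real.sqrt b| ≤ 1 := by
  set x := Real.sqrt a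
  set y := Real.sqrt b
  have hx : x ^ 2 = a := Real.sq_sqrt ha
  have hy : y ^ 2 = b := Real.sq_sqrt hb
  have hx0 : 0 ≤ x := Real.sqrt_nonneg a
  have hy0 : 0 ≤ y := Real.sqrt_nonneg b
  have key : ((x - y) ^ 2 - 1) * ((x + y) ^ 2 - 1) ≤ 0 := by nlinarith
  have hle : (x - y) ^ 2 ≤ (x + y) ^ 2 := by nlinarith
  have h1 : (x - y) ^ 2 ≤ 1 ∧ 1 ≤ (x + y) ^ 2 := by
    constructor <;> nlinarith [sq_nonneg (x - y), sq_nonneg (x + y)]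
  refine ⟨?_, ?_⟩
  · nlinarith [h1.2, sq_nonneg (x + y - 1)]
  · rw [abs_le]
    constructor <;> nlinarith [h1.1, sq_nonneg (x - y - 1), sq_nonneg (x - y + 1)]
end

section
/- Define on ℂⁿ × ℝ the gauge |(ζ,v)| = | -‖ζ‖² + iv |^{1/2} (Euclidean modulus of the complex number -‖ζ‖² + iv, raised to 1/2) and the Heisenberg group law (ζ,v)*(ζ',v') = (ζ+ζ', v+v'+2Im⟨ζ',ζ⟩) with inverse (ζ,v)⁻¹ = (-ζ,-v). Then d((ζ,v),(ζ',v')) = |(ζ,v)⁻¹*(ζ',v')| defines a metric on ℂⁿ × ℝ (the Korányi–Cygan metric); in particular it satisfies the triangle inequality. -/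
open scoped ComplexInnerProductSpace in
/-- The Korányi–Cygan gauge on the Heisenberg group `ℂⁿ × ℝ`. -/
noncomputable def heisGauge {n : ℕ} (p : EuclideanSpace ℂ (Fin n) × ℝ) : ℝ :=
  ‖((-‖p.1‖ ^ 2 : ℝ) : ℂ) + (p.2 : ℂ) * Complex.I‖ ^ ((1 : ℝ) / 2)

/-- The Heisenberg group law on `ℂⁿ × ℝ`. -/
noncomputable def heisMul {n : ℕ} (p q : EuclideanSpace ℂ (Fin n) × ℝ) :
    EuclideanSpace ℂ (Fin n) × ℝ :=
  (p.1 + q.1, p.2 + q.2 + 2 * (inner ℂ q.1 p.1 : ℂ).im)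

/-- Inversion in the Heisenberg group. -/
def heisInv {n : ℕ} (p : EuclideanSpace ℂ (Fin n) × ℝ) : EuclideanSpace ℂ (Fin n) × ℝ :=
  (-p.1, -p.2)

/-- The Korányi–Cygan metric. -/
noncomputable def heisDist {n : ℕ} (p q : EuclideanSpace ℂ (Fin n) × ℝ) : ℝ :=
  heisGauge (heisMul (heisInv p) q)

/-- Auxiliary complex quantity: `d(p,q)² = |heisB p q|`. -/
noncomputable def heisB {n : ℕ} (p q : EuclideanSpace ℂ (Fin n) × ℝ) : ℂ :=
  ((‖p.1‖ ^ 2 + ‖q.1‖ ^ 2 : ℝ) : ℂ) + ((p.2 - q.2 : ℝ) : ℂ) * Complex.I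
    - 2 * (inner ℂ p.1 q.1 : ℂ)

lemma heisB_eq {n : ℕ} (p q : EuclideanSpace ℂ (Fin n) × ℝ) :
    ((-‖(-p.1 + q.1)‖ ^ 2 : ℝ) : ℂ)
      + ((-p.2 + q.2 + 2 * (inner ℂ q.1 (-p.1) : ℂ).im : ℝ) : ℂ) * Complex.I
      = -(heisB p q) := by
  have h : ‖q.1 - p.1‖ ^ 2 = ‖q.1‖^2 - 2 * (inner ℂ q.1 p.1 : ℂ).re + ‖p.1‖^2 := by
    have := @norm_sub_sq ℂ _ _ _ _ q.1 p.1
    simpa using this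
  have hw : (inner ℂ p.1 q.1 : ℂ) = starRingEnd ℂ (inner ℂ q.1 p.1 : ℂ) :=
    (inner_conj_symm p.1 q.1).symm
  have hn : -p.1 + q.1 = q.1 - p.1 := by abel
  apply Complex.ext <;>
    simp only [heisB, hw, hn, inner_neg_right, Complex.add_re, Complex.add_im, Complex.sub_re,
      Complex.sub_im, Complex.mul_re, Complex.mul_im, Complex.ofReal_re, Complex.ofReal_im,
      Complex.I_re, Complex.I_im, Complex.neg_re, Complex.neg_im, Complex.conj_re,
      Complex.conj_im, Complex.ofReal_mul, Complex.ofReal_add, Complex.ofReal_neg,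
      Complex.ofReal_ofNat, Complex.re_ofNat, Complex.im_ofNat, h] <;>
    ring

lemma heisDist_eq {n : ℕ} (p q : EuclideanSpace ℂ (Fin n) × ℝ) :
    heisDist p q = Real.sqrt ‖heisB p q‖ := by
  rw [heisDist, heisMul, heisInv, heisGauge]
  simp only []
  rw [heisB_eq p q, norm_neg, Real.sqrt_eq_rpow]

lemma heisB_re {n : ℕ} (p q : EuclideanSpace ℂ (Fin n) × ℝ) :
    (heisB p q).re = ‖p.1 - q.1‖ ^ 2 := by
  have h : ‖p.1 - q.1‖ ^ 2 = ‖p.1‖^2 - 2 * (inner ℂ p.1 q.1 : ℂ).re + ‖q.1‖^2 := by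
    have := @norm_sub_sq ℂ _ _ _ _ p.1 q.1
    simpa using this
  simp only [heisB, Complex.sub_re, Complex.add_re, Complex.mul_re, Complex.ofReal_re,
    Complex.ofReal_im, Complex.I_re, Complex.I_im, Complex.re_ofNat, Complex.im_ofNat, h]
  ring

lemma heisB_cocycle {n : ℕ} (p q r : EuclideanSpace ℂ (Fin n) × ℝ) :
    heisB p r = heisB p q + heisB q r - 2 * (inner ℂ (p.1 - q.1) (r.1 - q.1) : ℂ) := by
  have hq : (inner ℂ q.1 q.1 : ℂ) = ((‖q.1‖ ^ 2 : ℝ) : ℂ) := by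
    simp [inner_self_eq_norm_sq_to_K]
  simp only [heisB, inner_sub_left, inner_sub_right, hq]
  push_cast
  ring

theorem stmt_3 {n : ℕ} :
    (∀ p : EuclideanSpace ℂ (Fin n) × ℝ, heisDist p p = 0) ∧
    (∀ p q : EuclideanSpace ℂ (Fin n) × ℝ, heisDist p q = 0 → p = q) ∧
    (∀ p q : EuclideanSpace ℂ (Fin n) × ℝ, heisDist p q = heisDist q p) ∧
    (∀ p q r : EuclideanSpace ℂ (Fin n) × ℝ, heisDist p r ≤ heisDist p q + heisDist q r) := by
  refine ⟨?_, ?_, ?_, ?_⟩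
  · intro p
    have hB : heisB p p = 0 := by
      have hq : (inner ℂ p.1 p.1 : ℂ) = ((‖p.1‖ ^ 2 : ℝ) : ℂ) := by
        simp [inner_self_eq_norm_sq_to_K]
      simp only [heisB, hq]
      push_cast
      ring
    rw [heisDist_eq, hB]
    simp
  · intro p q h
    rw [heisDist_eq] at h
    have habs : ‖heisB p q‖ = 0 :=
      le_antisymm (Real.sqrt_eq_zero'.mp h) (norm_nonneg _)
    have hB : heisB p q = 0 := by
      simpa using habs
    have h1 : p.1 = q.1 := by
      have h2 : ‖p.1 - q.1‖ ^ 2 = 0 := by rw [← heisB_re, hB]; simp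
      have h3 : p.1 - q.1 = 0 := by
        simpa [pow_eq_zero_iff] using h2
      exact sub_eq_zero.mp h3
    have h2 : p.2 = q.2 := by
      have him : (heisB p q).im = 0 := by rw [hB]; simp
      have hinner : (inner ℂ p.1 q.1 : ℂ) = ((‖q.1‖ ^ 2 : ℝ) : ℂ) := by
        rw [h1]; simp [inner_self_eq_norm_sq_to_K]
      simp only [heisB, hinner, Complex.sub_im, Complex.add_im, Complex.mul_im,
        Complex.ofReal_re, Complex.ofReal_im, Complex.I_re, Complex.I_im,
        Complex.re_ofNat, Complex.im_ofNat] at him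
      linarith [him]
    exact Prod.ext h1 h2
  · intro p q
    have hconj : heisB q p = starRingEnd ℂ (heisB p q) := by
      simp only [heisB, map_sub, map_add, map_mul, Complex.conj_ofReal, Complex.conj_I,
        inner_conj_symm, map_ofNat]
      push_cast
      ring
    rw [heisDist_eq, heisDist_eq, hconj, Complex.norm_conj]
  · intro p q r
    set a := ‖heisB p q‖ with ha
    set c := ‖heisB q r‖ with hc
    have ha0 : 0 ≤ a := norm_nonneg _
    have hc0 : 0 ≤ c := norm_nonneg _
    have hnorm1 : ‖p.1 - q.1‖ ≤ Real.sqrt a := by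
      have : ‖p.1 - q.1‖ = Real.sqrt ((heisB p q).re) := by
        rw [heisB_re]; exact (Real.sqrt_sq (norm_nonneg _)).symm
      rw [this]
      exact Real.sqrt_le_sqrt (Complex.re_le_norm _)
    have hnorm2 : ‖r.1 - q.1‖ ≤ Real.sqrt c := by
      have : ‖r.1 - q.1‖ = Real.sqrt ((heisB q r).re) := by
        rw [heisB_re q r, norm_sub_rev]
        exact (Real.sqrt_sq (norm_nonneg _)).symm
      rw [this]
      exact Real.sqrt_le_sqrt (Complex.re_le_norm _)
    have hA : ‖heisB p r‖ ≤ (Real.sqrt a + Real.sqrt c) ^ 2 := by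
      rw [heisB_cocycle p q r]
      calc ‖heisB p q + heisB q r - 2 * (inner ℂ (p.1 - q.1) (r.1 - q.1) : ℂ)‖
          ≤ ‖heisB p q + heisB q r‖
              + ‖2 * (inner ℂ (p.1 - q.1) (r.1 - q.1) : ℂ)‖ :=
            norm_sub_le _ _
        _ ≤ (a + c) + 2 * (‖p.1 - q.1‖ * ‖r.1 - q.1‖) := by
            gcongr
            · exact norm_add_le _ _
            · rw [norm_mul]
              simp only [Complex.norm_ofNat]
              gcongr
              have := norm_inner_le_norm (𝕜 := ℂ) (p.1 - q.1) (r.1 - q.1)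
              exact this
        _ ≤ (a + c) + 2 * (Real.sqrt a * Real.sqrt c) := by
            have := mul_le_mul hnorm1 hnorm2 (norm_nonneg _) (Real.sqrt_nonneg _)
            linarith
        _ = (Real.sqrt a + Real.sqrt c) ^ 2 := by
            rw [add_sq, Real.sq_sqrt ha0, Real.sq_sqrt hc0]
            ring
    rw [heisDist_eq, heisDist_eq, heisDist_eq, ← ha, ← hc]
    calc Real.sqrt ‖heisB p r‖ ≤ Real.sqrt ((Real.sqrt a + Real.sqrt c) ^ 2) :=
          Real.sqrt_le_sqrt hA
      _ = Real.sqrt a + Real.sqrt c :=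
          Real.sqrt_sq (by positivity)
end

section
/- Let ζ₂, ζ₃ ∈ ℂ^{n-1} and v₂, v₃ ∈ iℝ (purely imaginary), not both data trivial, defining X₁ = (-‖ζ₂‖²+v̄₂)·p⁻¹, X₂ = (-‖ζ₃‖²+v̄₃)·p̄⁻¹, X₃ = (-‖ζ₃‖²+v̄₃)(-‖ζ₂‖²+v̄₂)⁻¹, where p = -‖ζ₂‖² - ‖ζ₃‖² + 2⟨ζ₃,ζ₂⟩ + v̄₂ + v₃ ≠ 0 and the denominators -‖ζ₂‖²+v̄₂, -‖ζ₃‖²+v̄₃ are nonzero. Then 2|X₁|²Re(X₃) ≥ |X₁|² + |X₂|² - 2Re(X₁) - 2Re(X₂) + 1. -/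
/-- The fundamental cross--ratio inequality for a normalized quadruple
`(∞, (ζ₂,v₂), (ζ₃,v₃), 0)` in the boundary of complex hyperbolic space. -/
theorem stmt_9 {m : ℕ} (ζ₂ ζ₃ : EuclideanSpace ℂ (Fin m)) (v₂ v₃ : ℂ)
    (hv₂ : v₂.re = 0) (hv₃ : v₃.re = 0)
    (p X₁ X₂ X₃ : ℂ)
    (hp : p = ((-‖ζ₂‖ ^ 2 : ℝ) : ℂ) + ((-‖ζ₃‖ ^ 2 : ℝ) : ℂ) + 2 * (inner ℂ ζ₃ ζ₂ : ℂ) +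
      (starRingEnd ℂ) v₂ + v₃)
    (hp0 : p ≠ 0)
    (hd₂ : ((-‖ζ₂‖ ^ 2 : ℝ) : ℂ) + (starRingEnd ℂ) v₂ ≠ 0)
    (hd₃ : ((-‖ζ₃‖ ^ 2 : ℝ) : ℂ) + (starRingEnd ℂ) v₃ ≠ 0)
    (hX₁ : X₁ = (((-‖ζ₂‖ ^ 2 : ℝ) : ℂ) + (starRingEnd ℂ) v₂) * p⁻¹)
    (hX₂ : X₂ = (((-‖ζ₃‖ ^ 2 : ℝ) : ℂ) + (starRingEnd ℂ) v₃) * ((starRingEnd ℂ) p)⁻¹)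
    (hX₃ : X₃ = (((-‖ζ₃‖ ^ 2 : ℝ) : ℂ) + (starRingEnd ℂ) v₃) *
      (((-‖ζ₂‖ ^ 2 : ℝ) : ℂ) + (starRingEnd ℂ) v₂)⁻¹) :
    2 * ‖X₁‖ ^ 2 * X₃.re ≥
      ‖X₁‖ ^ 2 + ‖X₂‖ ^ 2 - 2 * X₁.re - 2 * X₂.re + 1 := by
  set a : ℂ := ((-‖ζ₂‖ ^ 2 : ℝ) : ℂ) + (starRingEnd ℂ) v₂ with ha
  set b : ℂ := ((-‖ζ₃‖ ^ 2 : ℝ) : ℂ) + (starRingEnd ℂ) v₃ with hb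
  set c : ℂ := (inner ℂ ζ₃ ζ₂ : ℂ) with hc
  have hare : a.re = -‖ζ₂‖ ^ 2 := by
    simp [ha, hv₂, ← Complex.ofReal_pow]
  have hbre : b.re = -‖ζ₃‖ ^ 2 := by
    simp [hb, hv₃, ← Complex.ofReal_pow]
  have hcs : c.re ^ 2 + c.im ^ 2 ≤ ‖ζ₂‖ ^ 2 * ‖ζ₃‖ ^ 2 := by
    have h1 : ‖c‖ ≤ ‖ζ₃‖ * ‖ζ₂‖ := norm_inner_le_norm ζ₃ ζ₂
    have h2 : Complex.normSq c ≤ (‖ζ₃‖ * ‖ζ₂‖) ^ 2 := by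
      rw [← Complex.sq_norm]
      exact pow_le_pow_left₀ (norm_nonneg _) h1 2
    rw [Complex.normSq_apply] at h2
    nlinarith [h2]
  have hpre : p.re = a.re + b.re + 2 * c.re := by
    rw [hp]; simp [ha, hb, ← Complex.ofReal_pow]; ring
  have hpim : p.im = a.im - b.im + 2 * c.im := by
    rw [hp]; simp [ha, hb, ← Complex.ofReal_pow]; ring
  have hN : (0:ℝ) < Complex.normSq p := Complex.normSq_pos.2 hp0
  have hM : (0:ℝ) < Complex.normSq a := Complex.normSq_pos.2 hd₂
  rw [Complex.normSq_apply] at hN hM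
  have hN' : p.re * p.re + p.im * p.im ≠ 0 := ne_of_gt hN
  have hM' : a.re * a.re + a.im * a.im ≠ 0 := ne_of_gt hM
  have e1 : ‖X₁‖ ^ 2 = (a.re * a.re + a.im * a.im) / (p.re * p.re + p.im * p.im) := by
    rw [hX₁, Complex.sq_norm, map_mul, Complex.normSq_inv, Complex.normSq_apply,
      Complex.normSq_apply, div_eq_mul_inv]
  have e2 : ‖X₂‖ ^ 2 = (b.re * b.re + b.im * b.im) / (p.re * p.re + p.im * p.im) := by
    rw [hX₂, Complex.sq_norm, map_mul, Complex.normSq_inv, Complex.normSq_conj,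
      Complex.normSq_apply, Complex.normSq_apply, div_eq_mul_inv]
  have e3 : X₁.re = (a.re * p.re + a.im * p.im) / (p.re * p.re + p.im * p.im) := by
    rw [hX₁, Complex.mul_re, Complex.inv_re, Complex.inv_im, Complex.normSq_apply]
    field_simp
    ring
  have e4 : X₂.re = (b.re * p.re - b.im * p.im) / (p.re * p.re + p.im * p.im) := by
    rw [hX₂, Complex.mul_re, Complex.inv_re, Complex.inv_im, Complex.normSq_conj,
      Complex.normSq_apply, Complex.conj_re, Complex.conj_im]
    field_simp
  have e5 : X₃.re = (b.re * a.re + b.im * a.im) / (a.re * a.re + a.im * a.im) := by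
    rw [hX₃, Complex.mul_re, Complex.inv_re, Complex.inv_im, Complex.normSq_apply]
    field_simp
    ring
  rw [ge_iff_le, ← sub_nonneg, e1, e2, e3, e4, e5]
  have key : 2 * ((a.re * a.re + a.im * a.im) / (p.re * p.re + p.im * p.im)) *
        ((b.re * a.re + b.im * a.im) / (a.re * a.re + a.im * a.im)) -
      ((a.re * a.re + a.im * a.im) / (p.re * p.re + p.im * p.im) +
        (b.re * b.re + b.im * b.im) / (p.re * p.re + p.im * p.im) -
        2 * ((a.re * p.re + a.im * p.im) / (p.re * p.re + p.im * p.im)) -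
        2 * ((b.re * p.re - b.im * p.im) / (p.re * p.re + p.im * p.im)) + 1) =
      (2 * (b.re * a.re + b.im * a.im) -
        ((a.re * a.re + a.im * a.im) + (b.re * b.re + b.im * b.im)
          - 2 * (a.re * p.re + a.im * p.im) - 2 * (b.re * p.re - b.im * p.im)
          + (p.re * p.re + p.im * p.im))) / (p.re * p.re + p.im * p.im) := by
    have hN2 : p.re ^ 2 + p.im ^ 2 ≠ 0 := by rw [sq, sq]; exact hN'
    have hM2 : a.re ^ 2 + a.im ^ 2 ≠ 0 := by rw [sq, sq]; exact hM'
    field_simp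
  rw [key]
  apply div_nonneg _ (le_of_lt hN)
  rw [hpre, hpim, hare, hbre]
  ring_nf
  nlinarith [hcs]
end

section
/- Let X₁, X₂, X₃ be complex numbers with |X₂| = |X₁||X₃| and 2|X₁|²Re(X₃) ≥ |X₁|² + |X₂|² - 2Re(X₁) - 2Re(X₂) + 1. Then (|X₁|^{1/2} + |X₂|^{1/2})² ≥ 1 and (|X₁|^{1/2} - |X₂|^{1/2})² ≤ 1. -/
theorem stmt_11 (X₁ X₂ X₃ : ℂ)
    (h1 : ‖X₂‖ = ‖X₁‖ * ‖X₃‖)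
    (h2 : 2 * ‖X₁‖ ^ 2 * X₃.re ≥
      ‖X₁‖ ^ 2 + ‖X₂‖ ^ 2 - 2 * X₁.re - 2 * X₂.re + 1) :
    1 ≤ (Real.sqrt (‖X₁‖) + Real.sqrt (‖X₂‖)) ^ 2 ∧
    (Real.sqrt (‖X₁‖) - Real.sqrt (‖X₂‖)) ^ 2 ≤ 1 := by
  set a := ‖X₁‖ with ha
  set b := ‖X₂‖ with hb
  have ha0 : 0 ≤ a := norm_nonneg _
  have hb0 : 0 ≤ b := norm_nonneg _
  have hr1 : X₁.re ≤ a := Complex.re_le_norm _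
  have hr2 : X₂.re ≤ b := Complex.re_le_norm _
  have hr3 : X₃.re ≤ ‖X₃‖ := Complex.re_le_norm _
  have hkey : a^2 + b^2 - 2*a - 2*b + 1 ≤ 2*a*b := by
    have h3 : 2 * a^2 * X₃.re ≤ 2 * a * b := by
      have : a^2 * ‖X₃‖ = a * b := by rw [h1]; ring
      nlinarith [sq_nonneg a]
    nlinarith
  have hsa : Real.sqrt a ^ 2 = a := Real.sq_sqrt ha0
  have hsb : Real.sqrt b ^ 2 = b := Real.sq_sqrt hb0
  have hsab : (Real.sqrt a * Real.sqrt b) ^ 2 = a * b := by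
    rw [mul_pow, hsa, hsb]
  have hsa0 : 0 ≤ Real.sqrt a := Real.sqrt_nonneg _
  have hsb0 : 0 ≤ Real.sqrt b := Real.sqrt_nonneg _
  set s := Real.sqrt a * Real.sqrt b with hs
  have hs0 : 0 ≤ s := mul_nonneg hsa0 hsb0
  have h4 : (a + b - 1) ^ 2 ≤ (2 * s) ^ 2 := by nlinarith
  have h5 := abs_le_of_sq_le_sq' h4 (by linarith)
  constructor
  · nlinarith [h5.1]
  · nlinarith [h5.2]
end
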